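/- Let rk : P → ω₁ ∪ {∞} be the splitting rank on a countable poset P of conditions with a countable family Φ of 'splitting formulas', where rk(p) ≥ α+1 requires some extension of p at each level to α-split via some φ ∈ Φ. If rk(p) ≥ ω₁ then there is a single φ ∈ Φ and extensions q₁ ⊇ p ∪ {φ}, q₂ ⊇ p ∪ {¬φ} with rk(q₁), rk(q₂) ≥ ω₁. (If not, for each φ one side is rank-bounded below some β_φ < ω₁; taking β** = sup over countably many φ gives that p does not β**-split, contradicting rk(p) ≥ β** + 1. Uses that a countable supremum of countable ordinals is countable.) -/

import Mathlib

/-- if `rk p ≥ β` for every `β < ω₁`, and every successor bound on `rk p`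
is witnessed by a splitting via some formula from a countable family, then a single
formula `φ` admits positive and negative extensions both of rank `≥ ω₁`. -/
theorem stmt14 {P Φ : Type*} [Countable P] [Countable Φ]
    (rk : P → Ordinal) (Extp Extm : P → Φ → Set P) (p : P)
    (hrk : ∀ β : Ordinal, β < (Cardinal.aleph 1).ord → β ≤ rk p)
    (hsplit : ∀ β : Ordinal, β + 1 ≤ rk p →
      ∃ φ : Φ, ∃ q₁ ∈ Extp p φ, ∃ q₂ ∈ Extm p φ, β ≤ rk q₁ ∧ β ≤ rk q₂) :
    ∃ φ : Φ, ∃ q₁ ∈ Extp p φ, ∃ q₂ ∈ Extm p φ,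
      ∀ β : Ordinal, β < (Cardinal.aleph 1).ord → β ≤ rk q₁ ∧ β ≤ rk q₂ := by
  classical
  have hlimit : Order.IsSuccLimit ((Cardinal.aleph 1).ord) :=
    Cardinal.isSuccLimit_ord (by simp [Cardinal.aleph0_le_aleph])
  have h0 : (0 : Ordinal) < (Cardinal.aleph 1).ord := hlimit.pos
  by_contra h
  push_neg at h
  -- for each triple pick a bad ordinal witnessing failure
  have hchoice : ∀ t : Φ × P × P, ∃ β : Ordinal, β < (Cardinal.aleph 1).ord ∧
      (t.2.1 ∈ Extp p t.1 → t.2.2 ∈ Extm p t.1 → β ≤ rk t.2.1 → ¬ β ≤ rk t.2.2) := by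
    rintro ⟨φ, q₁, q₂⟩
    by_cases h1 : q₁ ∈ Extp p φ
    · by_cases h2 : q₂ ∈ Extm p φ
      · obtain ⟨β, hβ, hβ'⟩ := h φ q₁ h1 q₂ h2
        exact ⟨β, hβ, fun _ _ hb1 => not_le_of_gt (hβ' hb1)⟩
      · exact ⟨0, h0, fun _ h2' => absurd h2' h2⟩
    · exact ⟨0, h0, fun h1' _ => absurd h1' h1⟩
  choose f hf hf' using hchoice
  -- the triple type is countable and nonempty
  have hne : Nonempty (Φ × P × P) := by
    obtain ⟨φ, q₁, _, q₂, _, _⟩ := hsplit 0 (hrk _ (by simpa using hlimit.succ_lt h0))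
    exact ⟨⟨φ, q₁, q₂⟩⟩
  have := hne; obtain ⟨e, he⟩ := exists_surjective_nat (Φ × P × P)
  set β₀ := iSup (f ∘ e) with hβ₀
  have hcof : (Cardinal.aleph 1).ord.cof = Cardinal.aleph 1 :=
    (Cardinal.isRegular_aleph_one).cof_eq
  have hβ₀lt : β₀ < (Cardinal.aleph 1).ord := by
    apply Ordinal.iSup_lt_ord_lift _ (fun i => hf (e i))
    rw [hcof]
    simpa using Cardinal.aleph0_lt_aleph_one
  obtain ⟨φ, q₁, h1, q₂, h2, hr1, hr2⟩ := hsplit β₀ (hrk _ (hlimit.succ_lt hβ₀lt))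
  obtain ⟨n, hn⟩ := he (φ, q₁, q₂)
  have hle : f (φ, q₁, q₂) ≤ β₀ := by
    rw [← hn]
    exact le_ciSup (Ordinal.bddAbove_range _) n
  exact hf' (φ, q₁, q₂) h1 h2 (hle.trans hr1) (hle.trans hr2)
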